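/- Define the weight polynomial p_k(x,y) = sum over alternating bridges w of length 2k of x^{h(w)} y^{2k - h(w)}, where h(w) is the number of horizontal steps. Then p_k(x,y) = sum_{l=0}^{k} (k choose l)^2 x^{2l} y^{2(k-l)}. -/

import Mathlib

open scoped Classical

/-- The value of an encoded step: `0 ↦ -1` (down), `1 ↦ 0` (horizontal), `2 ↦ 1` (up). -/
def stepVal (j : Fin 3) : ℤ := (j : ℤ) - 1

/-- `s` encodes an alternating bridge of length `2k`. -/
def IsAltBridge {k : ℕ} (s : Fin (2 * k) → Fin 3) : Prop :=
  (∑ i, stepVal (s i)) = 0 ∧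
  (∀ i : Fin (2 * k), (i : ℕ) % 2 = 0 → stepVal (s i) ≠ 1) ∧
  (∀ i : Fin (2 * k), (i : ℕ) % 2 = 1 → stepVal (s i) ≠ -1)

/-- The number of horizontal steps of an encoded path. -/
def numHoriz {k : ℕ} (s : Fin (2 * k) → Fin 3) : ℕ :=
  (Finset.univ.filter (fun j : Fin (2 * k) => stepVal (s j) = 0)).card

namespace AltAux

open Finset

variable {k : ℕ}

lemma sv_neg (v : Fin 3) : stepVal v = -1 ↔ v = 0 := by revert v; decide
lemma sv_zero (v : Fin 3) : stepVal v = 0 ↔ v = 1 := by revert v; decide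
lemma sv_one (v : Fin 3) : stepVal v = 1 ↔ v = 2 := by revert v; decide
lemma sv_split (v : Fin 3) :
    stepVal v = (if v = 2 then (1:ℤ) else 0) - (if v = 0 then 1 else 0) := by
  revert v; decide

def evn (j : Fin k) : Fin (2*k) := ⟨2*j, by have := j.2; omega⟩
def odd (j : Fin k) : Fin (2*k) := ⟨2*j+1, by have := j.2; omega⟩

lemma sum_stepVal (s : Fin (2*k) → Fin 3) :
    ∑ i, stepVal (s i) =
      ((univ.filter fun i => s i = 2).card : ℤ) - (univ.filter fun i => s i = 0).card := by
  simp only [sv_split]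
  rw [Finset.sum_sub_distrib, Finset.sum_boole, Finset.sum_boole]

lemma card_partition (s : Fin (2*k) → Fin 3) :
    (univ.filter fun i => s i = 0).card + (univ.filter fun i => s i = 1).card
      + (univ.filter fun i => s i = 2).card = 2*k := by
  have h0 := Finset.card_filter_add_card_filter_not (s := (univ : Finset (Fin (2*k))))
    (p := fun i => s i = 0)
  have he : (univ.filter fun i => ¬ s i = 0) =
      (univ.filter fun i => s i = 1) ∪ (univ.filter fun i => s i = 2) := by
    ext i
    have := (s i).2
    simp only [mem_filter, mem_union, mem_univ, true_and, Fin.ext_iff]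
    omega
  have hd : Disjoint (univ.filter fun i => s i = 1) (univ.filter fun i => s i = 2) := by
    rw [Finset.disjoint_filter]
    intro i _ h1 h2
    rw [h1] at h2; exact absurd h2 (by decide)
  rw [he, Finset.card_union_of_disjoint hd] at h0
  simp only [Finset.card_univ, Fintype.card_fin] at h0
  omega

lemma card_zero_eq (s : Fin (2*k) → Fin 3)
    (hodd : ∀ i : Fin (2*k), (i:ℕ) % 2 = 1 → s i ≠ 0) :
    (univ.filter fun i => s i = 0).card = (univ.filter fun j : Fin k => s (evn j) = 0).card := by
  apply Finset.card_nbij' (fun i => ⟨(i:ℕ)/2, by have := i.2; omega⟩) (fun j => evn j)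
  · intro i hi
    simp only [mem_coe, mem_filter, mem_univ, true_and] at hi ⊢
    have hpar : (i:ℕ) % 2 = 0 := by
      by_contra h
      exact hodd i (by omega) hi
    have : evn (⟨(i:ℕ)/2, by have := i.2; omega⟩ : Fin k) = i := by
      apply Fin.ext; simp [evn]; omega
    rw [this]; exact hi
  · intro j hj
    simp only [mem_coe, mem_filter, mem_univ, true_and] at hj ⊢
    exact hj
  · intro i hi
    simp only [mem_coe, mem_filter, mem_univ, true_and] at hi
    have hpar : (i:ℕ) % 2 = 0 := by
      by_contra h
      exact hodd i (by omega) hi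
    apply Fin.ext; simp [evn]; omega
  · intro j hj
    apply Fin.ext; simp [evn]

lemma card_two_eq (s : Fin (2*k) → Fin 3)
    (hev : ∀ i : Fin (2*k), (i:ℕ) % 2 = 0 → s i ≠ 2) :
    (univ.filter fun i => s i = 2).card = (univ.filter fun j : Fin k => s (odd j) = 2).card := by
  apply Finset.card_nbij' (fun i => ⟨(i:ℕ)/2, by have := i.2; omega⟩) (fun j => odd j)
  · intro i hi
    simp only [mem_coe, mem_filter, mem_univ, true_and] at hi ⊢
    have hpar : (i:ℕ) % 2 = 1 := by
      by_contra h
      exact hev i (by omega) hi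
    have : odd (⟨(i:ℕ)/2, by have := i.2; omega⟩ : Fin k) = i := by
      apply Fin.ext; simp [odd]; omega
    rw [this]; exact hi
  · intro j hj
    simp only [mem_coe, mem_filter, mem_univ, true_and] at hj ⊢
    exact hj
  · intro i hi
    simp only [mem_coe, mem_filter, mem_univ, true_and] at hi
    have hpar : (i:ℕ) % 2 = 1 := by
      by_contra h
      exact hev i (by omega) hi
    apply Fin.ext; simp [odd]; omega
  · intro j hj
    apply Fin.ext; simp [odd]; omega

def toPair (s : Fin (2*k) → Fin 3) : Finset (Fin k) × Finset (Fin k) :=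
  (univ.filter fun j => s (evn j) = 0, univ.filter fun j => s (odd j) = 2)

def fromPair (p : Finset (Fin k) × Finset (Fin k)) : Fin (2*k) → Fin 3 :=
  fun i => if (i:ℕ) % 2 = 0
    then (if (⟨(i:ℕ)/2, by have := i.2; omega⟩ : Fin k) ∈ p.1 then 0 else 1)
    else (if (⟨(i:ℕ)/2, by have := i.2; omega⟩ : Fin k) ∈ p.2 then 2 else 1)

lemma fromPair_evn (p : Finset (Fin k) × Finset (Fin k)) (j : Fin k) :
    fromPair p (evn j) = if j ∈ p.1 then 0 else 1 := by
  have h1 : (2 * (j:ℕ)) % 2 = 0 := by omega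
  have h2 : (2 * (j:ℕ)) / 2 = (j:ℕ) := by omega
  simp only [fromPair, evn, h1, if_true]
  congr 1
  · simp [Fin.ext_iff, h2]

lemma fromPair_odd (p : Finset (Fin k) × Finset (Fin k)) (j : Fin k) :
    fromPair p (odd j) = if j ∈ p.2 then 2 else 1 := by
  have h1 : ¬ ((2 * (j:ℕ) + 1) % 2 = 0) := by omega
  have h2 : (2 * (j:ℕ) + 1) / 2 = (j:ℕ) := by omega
  simp only [fromPair, odd, h1, if_false]
  congr 1
  · simp [Fin.ext_iff, h2]

lemma bridge_hev {s : Fin (2*k) → Fin 3} (hs : IsAltBridge s) :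
    ∀ i : Fin (2*k), (i:ℕ) % 2 = 0 → s i ≠ 2 := fun i hi h =>
  hs.2.1 i hi (by rw [h]; decide)

lemma bridge_hodd {s : Fin (2*k) → Fin 3} (hs : IsAltBridge s) :
    ∀ i : Fin (2*k), (i:ℕ) % 2 = 1 → s i ≠ 0 := fun i hi h =>
  hs.2.2 i hi (by rw [h]; decide)

lemma bridge_cards {s : Fin (2*k) → Fin 3} (hs : IsAltBridge s) :
    (toPair s).1.card = (toPair s).2.card := by
  have h := hs.1
  rw [sum_stepVal] at h
  have h0 := card_zero_eq s (bridge_hodd hs)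
  have h2 := card_two_eq s (bridge_hev hs)
  simp only [toPair]
  omega

lemma bridge_numHoriz {s : Fin (2*k) → Fin 3} (hs : IsAltBridge s) :
    numHoriz s = 2 * (k - (toPair s).1.card) ∧ 2 * k - numHoriz s = 2 * (toPair s).1.card := by
  have h := hs.1
  rw [sum_stepVal] at h
  have h0 := card_zero_eq s (bridge_hodd hs)
  have h2 := card_two_eq s (bridge_hev hs)
  have hp := card_partition s
  have hn : numHoriz s = (univ.filter fun i => s i = 1).card := by
    unfold numHoriz
    congr 1
    ext i
    simp [sv_zero]
  have hle : (toPair s).1.card ≤ k := by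
    simpa using Finset.card_le_univ (toPair s).1
  simp only [toPair] at hle ⊢
  omega

lemma fromPair_bridge (p : Finset (Fin k) × Finset (Fin k)) (h : p.1.card = p.2.card) :
    IsAltBridge (fromPair p) := by
  have hev : ∀ i : Fin (2*k), (i:ℕ) % 2 = 0 → fromPair p i ≠ 2 := by
    intro i hi
    simp only [fromPair, hi, if_true]
    split <;> decide
  have hodd : ∀ i : Fin (2*k), (i:ℕ) % 2 = 1 → fromPair p i ≠ 0 := by
    intro i hi
    have : ¬ ((i:ℕ) % 2 = 0) := by omega
    simp only [fromPair, this, if_false]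
    split <;> decide
  refine ⟨?_, ?_, ?_⟩
  · rw [sum_stepVal]
    have h0 := card_zero_eq (fromPair p) hodd
    have h2 := card_two_eq (fromPair p) hev
    have e1 : (univ.filter fun j : Fin k => fromPair p (evn j) = 0) = p.1 := by
      ext j; by_cases hj : j ∈ p.1 <;> simp [fromPair_evn, hj]
    have e2 : (univ.filter fun j : Fin k => fromPair p (odd j) = 2) = p.2 := by
      ext j; by_cases hj : j ∈ p.2 <;> simp [fromPair_odd, hj]
    rw [h0, h2, e1, e2, h]
    ring
  · intro i hi hv
    exact hev i hi ((sv_one _).mp hv)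
  · intro i hi hv
    exact hodd i hi ((sv_neg _).mp hv)

lemma toPair_fromPair (p : Finset (Fin k) × Finset (Fin k)) : toPair (fromPair p) = p := by
  ext1
  · ext j
    by_cases hj : j ∈ p.1 <;>
      simp [toPair, fromPair_evn, hj]
  · ext j
    by_cases hj : j ∈ p.2 <;>
      simp [toPair, fromPair_odd, hj]

lemma fromPair_toPair {s : Fin (2*k) → Fin 3} (hs : IsAltBridge s) :
    fromPair (toPair s) = s := by
  funext i
  rcases Nat.even_or_odd (i:ℕ) with hi | hi
  · have hpar : (i:ℕ) % 2 = 0 := Nat.even_iff.mp hi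
    have hieq : evn (⟨(i:ℕ)/2, by have := i.2; omega⟩ : Fin k) = i := by
      apply Fin.ext; simp [evn]; omega
    conv_lhs => rw [← hieq]
    rw [fromPair_evn]
    simp only [toPair, mem_filter, mem_univ, true_and, hieq]
    have hne2 := bridge_hev hs i hpar
    by_cases hmem : s i = 0
    · simp [hmem]
    · rw [if_neg hmem]
      have h1 : ¬ ((s i : ℕ) = 2) := fun hv => hne2 (Fin.ext hv)
      have h2 : ¬ ((s i : ℕ) = 0) := fun hv => hmem (Fin.ext hv)
      apply Fin.ext
      have h3 := (s i).2
      simp only [show ((1:Fin 3):ℕ) = 1 from rfl]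
      omega
  · have hpar : (i:ℕ) % 2 = 1 := Nat.odd_iff.mp hi
    have hieq : odd (⟨(i:ℕ)/2, by have := i.2; omega⟩ : Fin k) = i := by
      apply Fin.ext; simp [odd]; omega
    conv_lhs => rw [← hieq]
    rw [fromPair_odd]
    simp only [toPair, mem_filter, mem_univ, true_and, hieq]
    have hne0 := bridge_hodd hs i hpar
    by_cases hmem : s i = 2
    · simp [hmem]
    · rw [if_neg hmem]
      have h1 : ¬ ((s i : ℕ) = 0) := fun hv => hne0 (Fin.ext hv)
      have h2 : ¬ ((s i : ℕ) = 2) := fun hv => hmem (Fin.ext hv)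
      apply Fin.ext
      have h3 := (s i).2
      simp only [show ((1:Fin 3):ℕ) = 1 from rfl]
      omega

lemma pairSum (k : ℕ) (x y : ℝ) :
    ∑ p ∈ (univ : Finset (Finset (Fin k) × Finset (Fin k))).filter
        (fun p => p.1.card = p.2.card),
      x ^ (2*(k - p.1.card)) * y ^ (2*p.1.card)
    = ∑ l ∈ Finset.range (k+1), (k.choose l : ℝ)^2 * x^(2*l) * y^(2*(k-l)) := by
  rw [Finset.sum_filter, Fintype.sum_prod_type]
  have inner : ∀ A : Finset (Fin k),
      (∑ B : Finset (Fin k),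
        if A.card = B.card then x ^ (2*(k - A.card)) * y ^ (2*A.card) else 0)
      = (k.choose A.card : ℝ) * (x ^ (2*(k - A.card)) * y ^ (2*A.card)) := by
    intro A
    rw [← Finset.sum_filter, Finset.sum_const, nsmul_eq_mul]
    congr 2
    have : (univ.filter fun B : Finset (Fin k) => A.card = B.card)
        = Finset.powersetCard A.card univ := by
      rw [Finset.powersetCard_eq_filter, Finset.powerset_univ]
      simp [eq_comm]
    rw [this, Finset.card_powersetCard, Finset.card_univ, Fintype.card_fin]
  simp only [inner]
  have huniv : (univ : Finset (Finset (Fin k))) = (univ : Finset (Fin k)).powerset :=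
    (Finset.powerset_univ).symm
  rw [huniv, Finset.sum_powerset]
  rw [Finset.card_univ, Fintype.card_fin]
  rw [← Finset.sum_range_reflect]
  apply Finset.sum_congr rfl
  intro l hl
  rw [Finset.mem_range] at hl
  have hlk : l ≤ k := by omega
  have hr1 : k + 1 - 1 - l = k - l := by omega
  rw [hr1]
  have hAcard : ∀ A ∈ Finset.powersetCard (k - l) (univ : Finset (Fin k)), A.card = k - l := by
    intro A hA
    exact (Finset.mem_powersetCard.mp hA).2
  rw [Finset.sum_congr rfl (fun A hA => by rw [hAcard A hA])]
  rw [Finset.sum_const, nsmul_eq_mul, Finset.card_powersetCard, Finset.card_univ,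
    Fintype.card_fin]
  have h1 : k.choose (k - l) = k.choose l := Nat.choose_symm hlk
  have h2 : k - (k - l) = l := by omega
  rw [h1, h2]
  ring

end AltAux

/-- The weight polynomial `p_k(x,y) = ∑_{bridges w} x^{h(w)} y^{2k-h(w)}` equals
`∑_{l=0}^{k} (k choose l)^2 x^{2l} y^{2(k-l)}`. -/
theorem altBridge_weight_polynomial (k : ℕ) (x y : ℝ) :
    ∑ s ∈ Finset.univ.filter (fun s : Fin (2 * k) → Fin 3 => IsAltBridge s),
        x ^ numHoriz s * y ^ (2 * k - numHoriz s)
      = ∑ l ∈ Finset.range (k + 1),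
          (k.choose l : ℝ) ^ 2 * x ^ (2 * l) * y ^ (2 * (k - l)) := by
  classical
  have step1 :
      ∑ s ∈ Finset.univ.filter (fun s : Fin (2 * k) → Fin 3 => IsAltBridge s),
          x ^ numHoriz s * y ^ (2 * k - numHoriz s)
      = ∑ p ∈ (Finset.univ : Finset (Finset (Fin k) × Finset (Fin k))).filter
            (fun p => p.1.card = p.2.card),
          x ^ (2*(k - p.1.card)) * y ^ (2*p.1.card) := by
    apply Finset.sum_nbij' AltAux.toPair AltAux.fromPair
    · intro s hs
      rw [Finset.mem_filter] at hs ⊢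
      exact ⟨Finset.mem_univ _, AltAux.bridge_cards hs.2⟩
    · intro p hp
      rw [Finset.mem_filter] at hp ⊢
      exact ⟨Finset.mem_univ _, AltAux.fromPair_bridge p hp.2⟩
    · intro s hs
      rw [Finset.mem_filter] at hs
      exact AltAux.fromPair_toPair hs.2
    · intro p hp
      exact AltAux.toPair_fromPair p
    · intro s hs
      rw [Finset.mem_filter] at hs
      obtain ⟨h1, h2⟩ := AltAux.bridge_numHoriz hs.2
      rw [h2, h1]
  rw [step1, AltAux.pairSum]
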